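/- A threshold graph has no eigenvalue λ with −1 < λ < 0; that is, no eigenvalue of the adjacency matrix of a threshold graph lies in the open interval (−1, 0). -/

import Mathlib

/-- A graph is a threshold graph if adjacency is determined by vertex weights
exceeding a threshold. -/
def SimpleGraph.IsThreshold {V : Type*} (G : SimpleGraph V) : Prop :=
  ∃ (S : ℝ) (w : V → ℝ), ∀ u v : V, u ≠ v → (G.Adj u v ↔ S < w u + w v)

/-- `μ` is an eigenvalue of the adjacency matrix of `G`. -/
def SimpleGraph.HasAdjEigenvalue {V : Type*} [Fintype V] (G : SimpleGraph V) (μ : ℝ) : Prop :=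
  letI := Classical.decEq V
  letI : DecidableRel G.Adj := Classical.decRel _
  ∃ x : V → ℝ, x ≠ 0 ∧ (G.adjMatrix ℝ).mulVec x = μ • x

open Finset in
/-- In a threshold graph, every nonempty finite vertex set contains either a vertex
isolated within the set, or a vertex dominating the set. -/
private lemma threshold_dich {V : Type*} (G : SimpleGraph V)
    (S : ℝ) (w : V → ℝ) (hw : ∀ u v : V, u ≠ v → (G.Adj u v ↔ S < w u + w v))
    (s : Finset V) (hs : s.Nonempty) :
    ∃ v ∈ s, (∀ u ∈ s, ¬ G.Adj u v) ∨ (∀ u ∈ s, u ≠ v → G.Adj u v) := by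
  obtain ⟨vmin, hvmin, hmin⟩ := s.exists_min_image w hs
  obtain ⟨vmax, hvmax, hmax⟩ := s.exists_max_image w hs
  by_cases hiso : ∀ u ∈ s, ¬ G.Adj u vmin
  · exact ⟨vmin, hvmin, Or.inl hiso⟩
  · push_neg at hiso
    obtain ⟨u₀, hu₀s, hu₀⟩ := hiso
    refine ⟨vmax, hvmax, Or.inr fun u hu hne => ?_⟩
    have h1 : S < w u₀ + w vmin := (hw u₀ vmin hu₀.ne).mp hu₀
    have h2 : w u₀ ≤ w vmax := hmax u₀ hu₀s
    have h3 : w vmin ≤ w u := hmin u hu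
    exact (hw u vmax hne).mpr (by linarith)

open Finset in
/-- Key induction: for `0 < l < 1`, the operator `x ↦ l•x + A_s x` (adjacency restricted
to a finite set `s` of vertices of a threshold graph) has trivial kernel, and there is a
vector `h` with `l•h + A_s h = 1` on `s` whose sum over `s` exceeds `1` (unless `s = ∅`). -/
private lemma threshold_key {V : Type*} [DecidableEq V] (G : SimpleGraph V)
    [DecidableRel G.Adj]
    (S : ℝ) (w : V → ℝ) (hw : ∀ u v : V, u ≠ v → (G.Adj u v ↔ S < w u + w v))
    (l : ℝ) (hl0 : 0 < l) (hl1 : l < 1) :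
    ∀ s : Finset V,
      ((∀ x : V → ℝ, (∀ v ∈ s, l * x v + ∑ u ∈ s, (if G.Adj u v then x u else 0) = 0) →
        ∀ v ∈ s, x v = 0)
      ∧ ∃ h : V → ℝ, (∀ v ∈ s, l * h v + ∑ u ∈ s, (if G.Adj u v then h u else 0) = 1)
          ∧ (s = ∅ ∨ 1 < ∑ v ∈ s, h v)) := by
  intro s
  induction s using Finset.strongInduction with
  | _ s IH =>
  rcases eq_or_ne s ∅ with rfl | hne
  · exact ⟨fun x _ v hv => absurd hv (notMem_empty v), 0, by simp, Or.inl rfl⟩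
  obtain ⟨v, hv, hcase⟩ := threshold_dich G S w hw s (nonempty_iff_ne_empty.mpr hne)
  set e : Finset V := s.erase v with he
  obtain ⟨IHk, h₀, IHh, IHσ⟩ := IH e (erase_ssubset hv)
  set σ : ℝ := ∑ u ∈ e, h₀ u with hσ
  have hσ01 : σ = 0 ∨ 1 < σ := by
    rcases IHσ with h | h
    · left; rw [hσ, h, Finset.sum_empty]
    · right; exact h
  have hσl : σ ≠ l := by
    rcases hσ01 with h | h
    · rw [h]; exact hl0.ne
    · linarith
  have hsplit : ∀ (y : V → ℝ) (v' : V),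
      ∑ u ∈ s, (if G.Adj u v' then y u else 0)
        = (∑ u ∈ e, (if G.Adj u v' then y u else 0)) + (if G.Adj v v' then y v else 0) := by
    intro y v'
    rw [he, Finset.sum_erase_add s _ hv]
  rcases hcase with hiso | hdom
  · -- v is isolated within s
    have hnadj : ∀ v' ∈ s, ¬ G.Adj v v' := fun v' hv' ha => hiso v' hv' ha.symm
    constructor
    · intro x hx v'' hv''
      have hxv : x v = 0 := by
        have h1 := hx v hv
        have h2 : ∑ u ∈ s, (if G.Adj u v then x u else 0) = 0 :=
          Finset.sum_eq_zero fun u hu => by simp [hiso u hu]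
        rw [h2] at h1
        have := hl0.ne'
        nlinarith
      have hxe : ∀ v' ∈ e, x v' = 0 := by
        apply IHk
        intro v' hv'
        have h1 := hx v' (mem_of_mem_erase hv')
        rw [hsplit x v'] at h1
        simp only [hnadj v' (mem_of_mem_erase hv'), if_false, add_zero] at h1
        exact h1
      rcases eq_or_ne v'' v with rfl | hne'
      · exact hxv
      · exact hxe v'' (mem_erase.mpr ⟨hne', hv''⟩)
    · refine ⟨Function.update h₀ v (1 / l), fun v' hv' => ?_, Or.inr ?_⟩
      · have hupd : ∀ u ∈ e, Function.update h₀ v (1 / l) u = h₀ u := by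
          intro u hu
          exact Function.update_of_ne (ne_of_mem_erase hu) _ _
        rcases eq_or_ne v' v with rfl | hne'
        · rw [hsplit]
          have h2 : ∑ u ∈ e, (if G.Adj u v' then Function.update h₀ v' (1 / l) u else 0) = 0 :=
            Finset.sum_eq_zero fun u hu => by simp [hiso u (mem_of_mem_erase hu)]
          rw [h2]
          simp only [Function.update_self]
          rw [if_neg (G.irrefl)]
          field_simp
          norm_num
        · have hv'e : v' ∈ e := mem_erase.mpr ⟨hne', hv'⟩
          rw [hsplit]
          rw [if_neg (hnadj v' hv')]
          have h2 : ∑ u ∈ e, (if G.Adj u v' then Function.update h₀ v (1 / l) u else 0)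
              = ∑ u ∈ e, (if G.Adj u v' then h₀ u else 0) :=
            Finset.sum_congr rfl fun u hu => by rw [hupd u hu]
          rw [Function.update_of_ne hne', h2, add_zero]
          exact IHh v' hv'e
      · have hsum : ∑ u ∈ s, Function.update h₀ v (1 / l) u = σ + 1 / l := by
          rw [← Finset.sum_erase_add s _ hv, ← he, Function.update_self]
          congr 1
          exact Finset.sum_congr rfl fun u hu =>
            Function.update_of_ne (ne_of_mem_erase hu) _ _
        rw [hsum]
        have h1l : 1 < 1 / l := (one_lt_one_div hl0 hl1)
        rcases hσ01 with h | h
        · rw [h]; linarith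
        · have : 0 < 1 / l := by positivity
          linarith
  · -- v dominates s
    have hadj : ∀ u ∈ e, G.Adj u v := fun u hu =>
      hdom u (mem_of_mem_erase hu) (ne_of_mem_erase hu)
    have hadj' : ∀ v' ∈ e, G.Adj v v' := fun v' hv' => (hadj v' hv').symm
    constructor
    · intro x hx v'' hv''
      set t : ℝ := x v with ht
      -- on e, the modified vector x + t • h₀ is in the kernel of the e-system
      have hker : ∀ v' ∈ e, x v' + t * h₀ v' = 0 := by
        apply IHk
        intro v' hv'
        have h1 := hx v' (mem_of_mem_erase hv')
        rw [hsplit x v', if_pos (hadj' v' hv')] at h1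
        have h2 := IHh v' hv'
        have hsum2 : ∑ u ∈ e, (if G.Adj u v' then x u + t * h₀ u else 0)
            = (∑ u ∈ e, (if G.Adj u v' then x u else 0))
              + t * ∑ u ∈ e, (if G.Adj u v' then h₀ u else 0) := by
          rw [Finset.mul_sum, ← Finset.sum_add_distrib]
          exact Finset.sum_congr rfl fun u hu => by split <;> simp
        rw [hsum2]
        linear_combination h1 + t * h2 + ht
      -- equation at v gives t * (l - σ) = 0
      have hveq : t * (l - σ) = 0 := by
        have h1 := hx v hv
        rw [hsplit x v, if_neg (G.irrefl)] at h1
        have h2 : ∑ u ∈ e, (if G.Adj u v then x u else 0) = ∑ u ∈ e, x u :=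
          Finset.sum_congr rfl fun u hu => if_pos (hadj u hu)
        have h4 : ∀ u ∈ e, x u = -(t * h₀ u) := fun u hu => by linarith [hker u hu]
        have h3 : ∑ u ∈ e, x u = -(t * σ) := by
          calc ∑ u ∈ e, x u = ∑ u ∈ e, -(t * h₀ u) := Finset.sum_congr rfl h4
            _ = -∑ u ∈ e, t * h₀ u := by rw [Finset.sum_neg_distrib]
            _ = -(t * σ) := by rw [← Finset.mul_sum, hσ]
        rw [h2, h3] at h1
        linear_combination h1 + l * ht
      have ht0 : t = 0 := by
        rcases mul_eq_zero.mp hveq with h | h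
        · exact h
        · exact absurd (by linarith : σ = l) hσl
      rcases eq_or_ne v'' v with rfl | hne'
      · exact ht0
      · have := hker v'' (mem_erase.mpr ⟨hne', hv''⟩)
        rw [ht0] at this
        linarith
    · set t : ℝ := (1 - σ) / (l - σ) with ht
      have hlσ : l - σ ≠ 0 := fun h => hσl (by linarith)
      have htmul : t * (l - σ) = 1 - σ := div_mul_cancel₀ _ hlσ
      refine ⟨fun u => if u = v then t else (1 - t) * h₀ u, fun v' hv' => ?_, Or.inr ?_⟩
      · have h2 : ∑ u ∈ e, (if G.Adj u v' then (if u = v then t else (1 - t) * h₀ u) else 0)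
            = (1 - t) * ∑ u ∈ e, (if G.Adj u v' then h₀ u else 0) := by
          rw [Finset.mul_sum]
          refine Finset.sum_congr rfl fun u hu => ?_
          rw [if_neg (ne_of_mem_erase hu)]
          split <;> ring
        rcases eq_or_ne v' v with heq | hne'
        · subst heq
          dsimp only
          rw [hsplit, if_neg (G.irrefl), add_zero, if_pos rfl, h2]
          have h3 : ∑ u ∈ e, (if G.Adj u v' then h₀ u else 0) = σ := by
            rw [hσ]
            exact Finset.sum_congr rfl fun u hu => if_pos (hadj u hu)
          rw [h3]
          linarith [htmul]
        · have hv'e : v' ∈ e := mem_erase.mpr ⟨hne', hv'⟩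
          dsimp only
          rw [hsplit, if_pos (hadj' v' hv'e), if_pos rfl, if_neg hne', h2]
          have h3 := IHh v' hv'e
          linear_combination (1 - t) * h3
      · have hsum : ∑ u ∈ s, (if u = v then t else (1 - t) * h₀ u) = t + (1 - t) * σ := by
          rw [← Finset.sum_erase_add s _ hv, ← he, if_pos rfl, add_comm]
          congr 1
          rw [hσ, Finset.mul_sum]
          exact Finset.sum_congr rfl fun u hu => by rw [if_neg (ne_of_mem_erase hu)]
        rw [hsum]
        -- 1 < t + (1-t)σ  ⟺  (1-t)(1-σ) < 0
        rcases hσ01 with h | h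
        · -- σ = 0, t = 1/l > 1
          rw [h] at ht ⊢
          have : t = 1 / l := by rw [ht]; ring_nf
          have h1l : 1 < 1 / l := one_lt_one_div hl0 hl1
          rw [this]
          linarith
        · -- σ > 1: then 0 < t < 1
          have hd : 0 < σ - l := by linarith
          have ht1 : t < 1 := by
            rw [ht]
            have : (1 - σ) / (l - σ) = (σ - 1) / (σ - l) := by
              rw [div_eq_div_iff hlσ hd.ne']
              ring
            rw [this, div_lt_one hd]
            linarith
          nlinarith [mul_pos (sub_pos.mpr ht1) (sub_pos.mpr h)]

theorem threshold_no_eigenvalue_in_open_neg_one_zero {V : Type*} [Fintype V]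
    (G : SimpleGraph V) (hG : G.IsThreshold) (μ : ℝ) (hμ : G.HasAdjEigenvalue μ) :
    ¬ (-1 < μ ∧ μ < 0) := by
  rintro ⟨h1, h2⟩
  letI := Classical.decEq V
  letI : DecidableRel G.Adj := Classical.decRel _
  obtain ⟨S, w, hw⟩ := hG
  obtain ⟨x, hx0, hx⟩ := hμ
  set l : ℝ := -μ with hl
  have hl0 : 0 < l := by linarith
  have hl1 : l < 1 := by linarith
  have hkey := (threshold_key G S w hw l hl0 hl1 Finset.univ).1
  apply hx0
  funext v
  refine hkey x (fun v' _ => ?_) v (Finset.mem_univ v)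
  have heq : ((G.adjMatrix ℝ).mulVec x) v' = μ * x v' := by
    rw [hx]; rfl
  have hmv : ((G.adjMatrix ℝ).mulVec x) v'
      = ∑ u ∈ Finset.univ, (if G.Adj u v' then x u else 0) := by
    simp only [Matrix.mulVec, dotProduct, SimpleGraph.adjMatrix_apply]
    refine Finset.sum_congr rfl fun u _ => ?_
    by_cases h : G.Adj u v'
    · rw [if_pos h.symm, if_pos h, one_mul]
    · rw [if_neg (fun a => h a.symm), if_neg h, zero_mul]
  rw [hmv] at heq
  rw [heq, hl]
  ring
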